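/- (Lupu–Schwarz inequality) Let X be a real inner product space and x, w, z ∈ X. Then ‖x‖²⟨w,z⟩² + ‖w‖²⟨z,x⟩² + ‖z‖²⟨x,w⟩² ≤ ‖x‖²‖w‖²‖z‖² + 2⟨w,z⟩⟨z,x⟩⟨x,w⟩. -/
import Mathlib


open scoped InnerProductSpace

/-- The Lupu–Schwarz inequality in a real inner product space:
`‖x‖²⟪w,z⟫² + ‖w‖²⟪z,x⟫² + ‖z‖²⟪x,w⟫² ≤ ‖x‖²‖w‖²‖z‖² + 2⟪w,z⟫⟪z,x⟫⟪x,w⟫`. -/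
theorem lupu_schwarz {X : Type*} [NormedAddCommGroup X] [InnerProductSpace ℝ X]
    (x w z : X) :
    ‖x‖ ^ 2 * ⟪w, z⟫_ℝ ^ 2 + ‖w‖ ^ 2 * ⟪z, x⟫_ℝ ^ 2 + ‖z‖ ^ 2 * ⟪x, w⟫_ℝ ^ 2 ≤
      ‖x‖ ^ 2 * ‖w‖ ^ 2 * ‖z‖ ^ 2 + 2 * ⟪w, z⟫_ℝ * ⟪z, x⟫_ℝ * ⟪x, w⟫_ℝ := by
  by_cases hw : w = 0
  · simp [hw]
  · have hwpos : (0:ℝ) < ‖w‖ ^ 2 := pow_pos (norm_pos_iff.mpr hw) 2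
    have h1 := real_inner_mul_inner_self_le ((‖w‖ ^ 2 : ℝ) • x - ⟪x, w⟫_ℝ • w) ((‖w‖ ^ 2 : ℝ) • z - ⟪w, z⟫_ℝ • w)
    have h2 := real_inner_mul_inner_self_le w z
    simp only [inner_sub_right, inner_sub_left, inner_smul_right, inner_smul_left, real_inner_self_eq_norm_sq] at h1 h2
    simp only [map_pow, RCLike.star_def, conj_trivial, real_inner_comm w z, real_inner_comm z x, real_inner_comm x w] at h1
    nlinarith [hwpos, mul_pos hwpos hwpos, mul_pos (mul_pos hwpos hwpos) hwpos, h2, sq_nonneg ⟪x, w⟫_ℝ]
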